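/- For |q|<1, |p|<1, |x|<1, |y|<1: Ψ₁(q^a,p^b;p^c,q^d;q,p,x,y) = (1−p^b)·Ψ₁(q^a,p^{b+1};p^c,q^d;q,p,x,y) + p^b·Ψ₁(q^a,p^b;p^c,q^d;q,p,x,py). -/

import Mathlib

open scoped BigOperators
open Filter

/-- q-shifted factorial `(z;q)_k`. -/
noncomputable def qPoch (q z : ℂ) (k : ℕ) : ℂ :=
  ∏ r ∈ Finset.range k, (1 - z * q ^ r)

/-- infinite q-shifted factorial `(z;q)_∞`. -/
noncomputable def qPochInf (q z : ℂ) : ℂ := ∏' r : ℕ, (1 - z * q ^ r)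

/-- bibasic Humbert function `Ψ₁(A,B;C,D;q,p,x,y)` with `A=qᵃ, B=pᵇ, C=pᶜ, D=q^d`. -/
noncomputable def Psi1 (q p A B C D x y : ℂ) : ℂ :=
  ∑' kl : ℕ × ℕ,
    qPoch q A (kl.1 + kl.2) * qPoch p B kl.2 /
      (qPoch p C kl.2 * qPoch q D kl.1 * qPoch q q kl.1 * qPoch p p kl.2) *
      x ^ kl.1 * y ^ kl.2

/-- bibasic Humbert function `Ψ₂(A;B,C;q,p,x,y)` with `A=qᵃ, B=pᵇ, C=qᶜ`. -/
noncomputable def Psi2 (q p A B C x y : ℂ) : ℂ :=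
  ∑' kl : ℕ × ℕ,
    qPoch q A (kl.1 + kl.2) /
      (qPoch p B kl.2 * qPoch q C kl.1 * qPoch q q kl.1 * qPoch p p kl.2) *
      x ^ kl.1 * y ^ kl.2

/-- the q-difference operator `D_{x,q}`. -/
noncomputable def qDiff (q : ℂ) (f : ℂ → ℂ) : ℂ → ℂ :=
  fun x => (f x - f (q * x)) / ((1 - q) * x)

/-- basic hypergeometric series `₂φ₁(A,B;C;q,x)`. -/
noncomputable def phi21 (q A B C x : ℂ) : ℂ :=
  ∑' k : ℕ, qPoch q A k * qPoch q B k / (qPoch q C k * qPoch q q k) * x ^ k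

/-- basic confluent hypergeometric series `₁φ₁(A;C;q,z)`. -/
noncomputable def phi11 (q A C z : ℂ) : ℂ :=
  ∑' k : ℕ, qPoch q A k / (qPoch q C k * qPoch q q k) *
    (-1) ^ k * q ^ (k * (k - 1) / 2) * z ^ k

lemma qPoch_succ (q z : ℂ) (n : ℕ) :
    qPoch q z (n + 1) = qPoch q z n * (1 - z * q ^ n) := Finset.prod_range_succ _ _

lemma qPoch_succ' (q z : ℂ) (n : ℕ) :
    qPoch q z (n + 1) = (1 - z) * qPoch q (z * q) n := by
  unfold qPoch
  rw [Finset.prod_range_succ']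
  rw [pow_zero, mul_one, mul_comm]
  congr 1
  exact Finset.prod_congr rfl fun r _ => by ring

lemma qPoch_contig (p B : ℂ) (l : ℕ) :
    qPoch p B l = (1 - B) * qPoch p (B * p) l + B * p ^ l * qPoch p B l := by
  have h1 := qPoch_succ p B l
  have h2 := qPoch_succ' p B l
  rw [← h2, h1]; ring

lemma qPoch_add (q z : ℂ) (n m : ℕ) :
    qPoch q z (n + m) = qPoch q z n * ∏ r ∈ Finset.range m, (1 - z * q ^ (n + r)) := by
  unfold qPoch
  rw [Finset.prod_range_add]

lemma prod_one_sub_ge (n : ℕ) (u : ℕ → ℝ) (h0 : ∀ r, 0 ≤ u r) (h1 : ∀ r, u r ≤ 1) :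
    1 - ∑ r ∈ Finset.range n, u r ≤ ∏ r ∈ Finset.range n, (1 - u r) := by
  induction n with
  | zero => simp
  | succ n ih =>
    rw [Finset.prod_range_succ, Finset.sum_range_succ]
    have hprod : 0 ≤ ∏ r ∈ Finset.range n, (1 - u r) :=
      Finset.prod_nonneg fun r _ => by linarith [h1 r]
    have hsum : 0 ≤ ∑ r ∈ Finset.range n, u r :=
      Finset.sum_nonneg fun r _ => h0 r
    nlinarith [h0 n, h1 n]

lemma geom_sum_le_inv (c : ℝ) (h0 : 0 ≤ c) (h1 : c < 1) (n : ℕ) :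
    ∑ r ∈ Finset.range n, c ^ r ≤ (1 - c)⁻¹ := by
  rw [← tsum_geometric_of_lt_one h0 h1]
  exact Summable.sum_le_tsum _ (fun i _ => pow_nonneg h0 i) (summable_geometric_of_lt_one h0 h1)

lemma qPoch_abs_le (q z : ℂ) (hq : ‖q‖ < 1) (n : ℕ) :
    ‖qPoch q z n‖ ≤ Real.exp (‖z‖ * (1 - ‖q‖)⁻¹) := by
  unfold qPoch
  rw [norm_prod]
  calc ∏ r ∈ Finset.range n, ‖1 - z * q ^ r‖
      ≤ ∏ r ∈ Finset.range n, Real.exp (‖z‖ * ‖q‖ ^ r) := by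
        apply Finset.prod_le_prod (fun r _ => norm_nonneg _)
        intro r _
        calc ‖1 - z * q ^ r‖ ≤ ‖(1:ℂ)‖ + ‖z * q ^ r‖ := by
              exact norm_sub_le _ _
          _ ≤ Real.exp (‖z‖ * ‖q‖ ^ r) := by
              rw [norm_one, norm_mul, norm_pow]
              linarith [Real.add_one_le_exp (‖z‖ * ‖q‖ ^ r)]
    _ = Real.exp (∑ r ∈ Finset.range n, ‖z‖ * ‖q‖ ^ r) := by
        rw [Real.exp_sum]
    _ ≤ Real.exp (‖z‖ * (1 - ‖q‖)⁻¹) := by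
        apply Real.exp_le_exp.mpr
        rw [← Finset.mul_sum]
        exact mul_le_mul_of_nonneg_left (geom_sum_le_inv _ (norm_nonneg _) hq n) (norm_nonneg _)

lemma qPoch_lower (q z : ℂ) (hq1 : ‖q‖ < 1) :
    ∃ δ > 0, ∀ n, qPoch q z n = 0 ∨ δ ≤ ‖qPoch q z n‖ := by
  -- choose N with |z| |q|^N (1-|q|)⁻¹ ≤ 1/2
  have hq0 : (0:ℝ) ≤ ‖q‖ := norm_nonneg _
  have htend : Tendsto (fun n : ℕ => ‖z‖ * ‖q‖ ^ n * (1 - ‖q‖)⁻¹)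
      atTop (nhds 0) := by
    have h := (tendsto_pow_atTop_nhds_zero_of_lt_one hq0 hq1).const_mul (‖z‖)
    simpa using h.mul_const (1 - ‖q‖)⁻¹
  obtain ⟨N, hN⟩ := (htend.eventually (gt_mem_nhds one_half_pos)).exists
  -- tail bound for n ≥ N
  have htail : ∀ m : ℕ, (1:ℝ)/2 ≤ ‖∏ r ∈ Finset.range m, (1 - z * q ^ (N + r))‖ := by
    intro m
    rw [norm_prod]
    have hu0 : ∀ r : ℕ, 0 ≤ ‖z‖ * ‖q‖ ^ (N + r) := fun r =>
      mul_nonneg (norm_nonneg _) (pow_nonneg hq0 _)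
    have hinv : (1:ℝ) ≤ (1 - ‖q‖)⁻¹ := by
      rw [le_inv_comm₀] <;> nlinarith [norm_nonneg q]
    have hu1 : ∀ r : ℕ, ‖z‖ * ‖q‖ ^ (N + r) ≤ 1/2 := by
      intro r
      have h1 : ‖q‖ ^ (N + r) ≤ ‖q‖ ^ N :=
        pow_le_pow_of_le_one hq0 hq1.le (Nat.le_add_right _ _)
      have h2 : ‖z‖ * ‖q‖ ^ N ≤
          ‖z‖ * ‖q‖ ^ N * (1 - ‖q‖)⁻¹ := by
        nlinarith [hu0 0, mul_nonneg (norm_nonneg z) (pow_nonneg hq0 N)]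
      nlinarith [mul_le_mul_of_nonneg_left h1 (norm_nonneg z)]
    have hsum : ∑ r ∈ Finset.range m, ‖z‖ * ‖q‖ ^ (N + r) ≤ 1/2 := by
      have : ∑ r ∈ Finset.range m, ‖z‖ * ‖q‖ ^ (N + r)
          = ‖z‖ * ‖q‖ ^ N * ∑ r ∈ Finset.range m, ‖q‖ ^ r := by
        rw [Finset.mul_sum]
        exact Finset.sum_congr rfl fun r _ => by rw [pow_add]; ring
      rw [this]
      calc ‖z‖ * ‖q‖ ^ N * ∑ r ∈ Finset.range m, ‖q‖ ^ r
          ≤ ‖z‖ * ‖q‖ ^ N * (1 - ‖q‖)⁻¹ :=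
            mul_le_mul_of_nonneg_left (geom_sum_le_inv _ hq0 hq1 m) (hu0 0 |>.trans_eq (by rw [add_zero]))
        _ ≤ 1/2 := hN.le
    calc (1:ℝ)/2 ≤ 1 - ∑ r ∈ Finset.range m, ‖z‖ * ‖q‖ ^ (N + r) := by linarith
      _ ≤ ∏ r ∈ Finset.range m, (1 - ‖z‖ * ‖q‖ ^ (N + r)) :=
          prod_one_sub_ge m _ hu0 (fun r => (hu1 r).trans (by norm_num))
      _ ≤ ∏ r ∈ Finset.range m, ‖1 - z * q ^ (N + r)‖ := by
          apply Finset.prod_le_prod (fun r _ => by linarith [hu1 r])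
          intro r _
          calc 1 - ‖z‖ * ‖q‖ ^ (N + r)
              = ‖(1:ℂ)‖ - ‖z * q ^ (N + r)‖ := by
                rw [norm_one, norm_mul, norm_pow]
            _ ≤ ‖1 - z * q ^ (N + r)‖ := by
                have := norm_sub_norm_le (1 : ℂ) (z * q ^ (N + r))
                simpa using this
  -- minimum over small indices
  set S : Finset ℕ := (Finset.range (N + 1)).filter (fun k => qPoch q z k ≠ 0) with hS
  have h0S : 0 ∈ S := by
    rw [hS, Finset.mem_filter]
    simp [qPoch]
  have hSne : S.Nonempty := ⟨0, h0S⟩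
  set ε : ℝ := S.inf' hSne (fun k => ‖qPoch q z k‖) with hε
  have hεpos : 0 < ε := by
    rw [hε, Finset.lt_inf'_iff]
    intro k hk
    rw [hS, Finset.mem_filter] at hk
    exact norm_pos_iff.mpr hk.2
  refine ⟨ε / 2, by linarith, fun n => ?_⟩
  by_cases h : qPoch q z n = 0
  · exact Or.inl h
  right
  by_cases hn : n ≤ N
  · have hmem : n ∈ S := by
      rw [hS, Finset.mem_filter]
      exact ⟨Finset.mem_range.mpr (by omega), h⟩
    have := Finset.inf'_le (fun k => ‖qPoch q z k‖) hmem
    linarith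
  · obtain ⟨m, rfl⟩ : ∃ m, n = N + m := ⟨n - N, by omega⟩
    rw [qPoch_add, norm_mul]
    have hPN : qPoch q z N ≠ 0 := by
      rw [qPoch_add] at h
      exact fun h0 => h (by rw [h0, zero_mul])
    have hmem : N ∈ S := by
      rw [hS, Finset.mem_filter]
      exact ⟨Finset.mem_range.mpr (by omega), hPN⟩
    have h1 : ε ≤ ‖qPoch q z N‖ :=
      Finset.inf'_le (fun k => ‖qPoch q z k‖) hmem
    have h2 := htail m
    nlinarith [norm_nonneg (qPoch q z N)]

lemma psi1_summable (q p A B C D x y : ℂ)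
    (hq1 : ‖q‖ < 1) (hp1 : ‖p‖ < 1)
    (hx : ‖x‖ < 1) (hy : ‖y‖ < 1) :
    Summable (fun kl : ℕ × ℕ =>
      qPoch q A (kl.1 + kl.2) * qPoch p B kl.2 /
        (qPoch p C kl.2 * qPoch q D kl.1 * qPoch q q kl.1 * qPoch p p kl.2) *
        x ^ kl.1 * y ^ kl.2) := by
  obtain ⟨δC, hδC, hC⟩ := qPoch_lower p C hp1
  obtain ⟨δD, hδD, hD⟩ := qPoch_lower q D hq1
  obtain ⟨δq, hδq, hq⟩ := qPoch_lower q q hq1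
  obtain ⟨δp, hδp, hp⟩ := qPoch_lower p p hp1
  set MA := Real.exp (‖A‖ * (1 - ‖q‖)⁻¹) with hMA
  set MB := Real.exp (‖B‖ * (1 - ‖p‖)⁻¹) with hMB
  set K := MA * MB / (δC * δD * δq * δp) with hK
  have hK0 : 0 ≤ K := by
    apply div_nonneg (mul_nonneg (Real.exp_pos _).le (Real.exp_pos _).le)
    positivity
  have hgsum : Summable (fun kl : ℕ × ℕ => K * (‖x‖ ^ kl.1 * ‖y‖ ^ kl.2)) := by
    apply Summable.mul_left
    exact Summable.mul_of_nonneg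
      (summable_geometric_of_lt_one (norm_nonneg _) hx)
      (summable_geometric_of_lt_one (norm_nonneg _) hy)
      (fun k => pow_nonneg (norm_nonneg _) _)
      (fun l => pow_nonneg (norm_nonneg _) _)
  apply Summable.of_norm_bounded hgsum
  rintro ⟨k, l⟩
  simp only [norm_mul, norm_div, norm_pow]
  by_cases hden : qPoch p C l * qPoch q D k * qPoch q q k * qPoch p p l = 0
  · have h0 : ‖qPoch p C l‖ * ‖qPoch q D k‖ * ‖qPoch q q k‖ *
        ‖qPoch p p l‖ = 0 := by
      have := congrArg norm hden
      simpa only [norm_mul, norm_zero] using this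
    rw [h0, div_zero, zero_mul, zero_mul]
    positivity
  · have hC' : qPoch p C l ≠ 0 := fun h => hden (by rw [h]; ring)
    have hD' : qPoch q D k ≠ 0 := fun h => hden (by rw [h]; ring)
    have hq' : qPoch q q k ≠ 0 := fun h => hden (by rw [h]; ring)
    have hp' : qPoch p p l ≠ 0 := fun h => hden (by rw [h]; ring)
    have hC2 := (hC l).resolve_left hC'
    have hD2 := (hD k).resolve_left hD'
    have hq2 := (hq k).resolve_left hq'
    have hp2 := (hp l).resolve_left hp'
    have hnum : ‖qPoch q A (k + l)‖ * ‖qPoch p B l‖ ≤ MA * MB :=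
      mul_le_mul (qPoch_abs_le q A hq1 _) (qPoch_abs_le p B hp1 _)
        (norm_nonneg _) (Real.exp_pos _).le
    have hden2 : δC * δD * δq * δp ≤ ‖qPoch p C l‖ * ‖qPoch q D k‖ *
        ‖qPoch q q k‖ * ‖qPoch p p l‖ := by
      gcongr <;> positivity
    have hfrac : ‖qPoch q A (k + l)‖ * ‖qPoch p B l‖ /
        (‖qPoch p C l‖ * ‖qPoch q D k‖ *
          ‖qPoch q q k‖ * ‖qPoch p p l‖) ≤ K := by
      rw [hK]
      exact div_le_div₀ (mul_nonneg (Real.exp_pos _).le (Real.exp_pos _).le) hnum (by positivity) hden2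
    calc ‖qPoch q A (k + l)‖ * ‖qPoch p B l‖ /
          (‖qPoch p C l‖ * ‖qPoch q D k‖ *
            ‖qPoch q q k‖ * ‖qPoch p p l‖) *
          ‖x‖ ^ k * ‖y‖ ^ l
        ≤ K * ‖x‖ ^ k * ‖y‖ ^ l := by
          gcongr <;> positivity
      _ = K * (‖x‖ ^ k * ‖y‖ ^ l) := by ring


theorem stmt3 (q p a b c d x y : ℂ)
    (hq0 : 0 < ‖q‖) (hq1 : ‖q‖ < 1)
    (hp0 : 0 < ‖p‖) (hp1 : ‖p‖ < 1)
    (hx : ‖x‖ < 1) (hy : ‖y‖ < 1) :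
    Psi1 q p (q ^ a) (p ^ b) (p ^ c) (q ^ d) x y =
      (1 - p ^ b) * Psi1 q p (q ^ a) (p ^ (b + 1)) (p ^ c) (q ^ d) x y +
        p ^ b * Psi1 q p (q ^ a) (p ^ b) (p ^ c) (q ^ d) x (p * y) := by
  have hpne : p ≠ 0 := by
    intro h
    rw [h] at hp0
    simp at hp0
  have hB : p ^ (b + 1) = p ^ b * p := by
    rw [Complex.cpow_add _ _ hpne, Complex.cpow_one]
  have hpy : ‖p * y‖ < 1 := by
    rw [norm_mul]
    nlinarith [norm_nonneg p, norm_nonneg y]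
  have h1 := psi1_summable q p (q ^ a) (p ^ b * p) (p ^ c) (q ^ d) x y hq1 hp1 hx hy
  have h2 := psi1_summable q p (q ^ a) (p ^ b) (p ^ c) (q ^ d) x (p * y) hq1 hp1 hx hpy
  rw [hB]
  unfold Psi1
  rw [← tsum_mul_left, ← tsum_mul_left, ← Summable.tsum_add (h1.mul_left _) (h2.mul_left _)]
  apply tsum_congr
  rintro ⟨k, l⟩
  have key := qPoch_contig p (p ^ b) l
  simp only []
  linear_combination (qPoch q (q ^ a) (k + l) /
      (qPoch p (p ^ c) l * qPoch q (q ^ d) k * qPoch q q k * qPoch p p l) *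
      x ^ k * y ^ l) * key
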